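/- With T, ρ, σ, μ as above, for any u, v ∈ T with u < v: ∫_{(u,v)} a μ(da) = v²/2 − u²/2 − u·(σ(u)−u)/2 − v·(v−ρ(v))/2. -/

import Mathlib

open MeasureTheory

/-- `ρ(x) = sup{y ∈ T : y < x}`. -/
noncomputable def leftNbr (T : Set ℝ) (x : ℝ) : ℝ := sSup {y ∈ T | y < x}

/-- `σ(x) = inf{y ∈ T : y > x}`. -/
noncomputable def rightNbr (T : Set ℝ) (x : ℝ) : ℝ := sInf {y ∈ T | x < y}

open Set
open scoped ENNReal Classical

section Basic
variable {T : Set ℝ} {x y z : ℝ}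

lemma bddBelow_right : BddBelow {y ∈ T | x < y} := ⟨x, fun z hz => hz.2.le⟩
lemma bddAbove_left : BddAbove {y ∈ T | y < x} := ⟨x, fun z hz => hz.2.le⟩

lemma le_rightNbr (h : z ∈ T) (hz : x < z) : x ≤ rightNbr T x :=
  le_csInf ⟨z, h, hz⟩ fun y hy => hy.2.le

lemma rightNbr_le (h : y ∈ T) (hxy : x < y) : rightNbr T x ≤ y :=
  csInf_le bddBelow_right ⟨h, hxy⟩

lemma leftNbr_le (h : z ∈ T) (hz : z < x) : leftNbr T x ≤ x :=
  csSup_le ⟨z, h, hz⟩ fun y hy => hy.2.le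

lemma le_leftNbr (h : y ∈ T) (hxy : y < x) : y ≤ leftNbr T x :=
  le_csSup bddAbove_left ⟨h, hxy⟩

lemma rightNbr_mem (hT : IsClosed T) (h : z ∈ T) (hz : x < z) : rightNbr T x ∈ T := by
  have h1 : rightNbr T x ∈ closure {y ∈ T | x < y} :=
    csInf_mem_closure ⟨z, h, hz⟩ bddBelow_right
  have h2 : closure {y ∈ T | x < y} ⊆ T :=
    hT.closure_subset_iff.2 fun y hy => hy.1
  exact h2 h1

lemma leftNbr_mem (hT : IsClosed T) (h : z ∈ T) (hz : z < x) : leftNbr T x ∈ T := by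
  have h1 : leftNbr T x ∈ closure {y ∈ T | y < x} :=
    csSup_mem_closure ⟨z, h, hz⟩ bddAbove_left
  exact hT.closure_subset_iff.2 (fun y hy => hy.1) h1

lemma notMem_of_mem_Ioo_rightNbr (ht : y ∈ Ioo x (rightNbr T x)) : y ∉ T := fun hy =>
  absurd (rightNbr_le hy ht.1) (not_le.2 ht.2)

lemma notMem_of_mem_Ioo_leftNbr (ht : y ∈ Ioo (leftNbr T x) x) : y ∉ T := fun hy =>
  absurd (le_leftNbr hy ht.2) (not_le.2 ht.1)

/-- `ρ(σ x) = x` for right-scattered `x ∈ T`. -/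
lemma leftNbr_rightNbr (hx : x ∈ T) (hs : x < rightNbr T x) :
    leftNbr T (rightNbr T x) = x := by
  refine le_antisymm (csSup_le ⟨x, hx, hs⟩ fun y hy => ?_) (le_csSup bddAbove_left ⟨hx, hs⟩)
  by_contra hxy
  exact absurd (rightNbr_le hy.1 (not_le.1 hxy)) (not_le.2 hy.2)

/-- `σ(ρ y) = y` for left-scattered `y ∈ T`. -/
lemma rightNbr_leftNbr (hy : y ∈ T) (hs : leftNbr T y < y) :
    rightNbr T (leftNbr T y) = y := by
  refine le_antisymm (csInf_le bddBelow_right ⟨hy, hs⟩) (le_csInf ⟨y, hy, hs⟩ fun z hz => ?_)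
  by_contra hzy
  exact absurd (le_leftNbr hz.1 (not_le.1 hzy)) (not_le.2 hz.2)

end Basic

/-- Left endpoints of the gap intervals of `T` inside `[u, v)`. -/
def RS (T : Set ℝ) (u v : ℝ) : Set ℝ :=
  {x | x ∈ T ∧ u ≤ x ∧ x < v ∧ x < rightNbr T x}

section Gaps
variable {T : Set ℝ} {u v : ℝ}

lemma RS_rightNbr_le_v (hv : v ∈ T) {x : ℝ} (hx : x ∈ RS T u v) : rightNbr T x ≤ v :=
  rightNbr_le hv hx.2.2.1

lemma gap_subset (hv : v ∈ T) {x : ℝ} (hx : x ∈ RS T u v) : Ioo x (rightNbr T x) ⊆ Ioo u v := fun t ht =>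
  ⟨lt_of_le_of_lt hx.2.1 ht.1, lt_of_lt_of_le ht.2 (RS_rightNbr_le_v hv hx)⟩

lemma gap_disjoint' {x y : ℝ} (hy : y ∈ T) (hxy : x < y) :
    Disjoint (Ioo x (rightNbr T x)) (Ioo y (rightNbr T y)) := by
  have h : rightNbr T x ≤ y := rightNbr_le hy hxy
  rw [Set.disjoint_left]
  intro t ht1 ht2
  exact absurd (lt_of_lt_of_le ht1.2 h) (not_lt.2 ht2.1.le)

lemma gaps_disjoint : (RS T u v).PairwiseDisjoint (fun x => Ioo x (rightNbr T x)) := by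
  intro x hx y hy hxy
  rcases lt_or_gt_of_ne hxy with h | h
  · exact gap_disjoint' hy.1 h
  · exact (gap_disjoint' hx.1 h).symm

lemma RS_countable : (RS T u v).Countable :=
  Set.PairwiseDisjoint.countable_of_Ioo gaps_disjoint fun x hx => hx.2.2.2

lemma union_gaps (hT : IsClosed T) (hu : u ∈ T) (hv : v ∈ T) : Ioo u v \ T = ⋃ x : RS T u v, Ioo (x : ℝ) (rightNbr T x) := by
  ext t
  constructor
  · rintro ⟨⟨htu, htv⟩, htT⟩
    set x := leftNbr T t with hx
    have hxT : x ∈ T := leftNbr_mem hT hu htu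
    have hxle : x ≤ t := leftNbr_le hu htu
    have hxlt : x < t := lt_of_le_of_ne hxle (fun h => htT (h ▸ hxT))
    have hux : u ≤ x := le_leftNbr hu htu
    have hσ : t ≤ rightNbr T x := by
      refine le_csInf ⟨v, hv, lt_trans hxlt htv⟩ fun z hz => ?_
      by_contra hzt
      exact absurd (le_leftNbr hz.1 (not_le.1 hzt)) (not_le.2 hz.2)
    have hσT : rightNbr T x ∈ T := rightNbr_mem hT hv (lt_trans hxlt htv)
    have htσ : t < rightNbr T x := lt_of_le_of_ne hσ (fun h => htT (h ▸ hσT))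
    exact Set.mem_iUnion.2 ⟨⟨x, hxT, hux, lt_trans hxlt htv, lt_of_lt_of_le hxlt hσ⟩, hxlt, htσ⟩
  · rintro ⟨s, ⟨x, rfl⟩, ht⟩
    exact ⟨gap_subset hv x.2 ht, notMem_of_mem_Ioo_rightNbr ht⟩

end Gaps

section Leb
variable {T : Set ℝ} {u v : ℝ}

lemma gaps_disjoint_subtype :
    Pairwise (Function.onFun Disjoint fun x : RS T u v => Ioo (x : ℝ) (rightNbr T x)) :=
  fun i j hij => gaps_disjoint i.2 j.2 (Subtype.coe_injective.ne hij)

lemma volume_gaps_sum (hT : IsClosed T) (hu : u ∈ T) (hv : v ∈ T) :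
    ∑' x : RS T u v, volume (Ioo (x : ℝ) (rightNbr T x)) ≤ ENNReal.ofReal (v - u) := by
  have hc : Countable (RS T u v) := (RS_countable (u := u) (v := v)).to_subtype
  rw [← measure_iUnion gaps_disjoint_subtype (fun _ => measurableSet_Ioo),
    ← union_gaps hT hu hv]
  calc volume (Ioo u v \ T) ≤ volume (Ioo u v) := measure_mono diff_subset
    _ = ENNReal.ofReal (v - u) := Real.volume_Ioo

/-- The base summability fact: total gap length is finite. -/
lemma summable_gaps (hT : IsClosed T) (hu : u ∈ T) (hv : v ∈ T) :
    Summable ((RS T u v).indicator fun x => rightNbr T x - x) := by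
  have hc : Countable (RS T u v) := (RS_countable (u := u) (v := v)).to_subtype
  have h1 : ∑' x : ℝ, ((RS T u v).indicator fun x => volume (Ioo x (rightNbr T x))) x ≠ ⊤ := by
    rw [← tsum_subtype]
    exact ne_top_of_le_ne_top ENNReal.ofReal_ne_top (volume_gaps_sum hT hu hv)
  have h2 := ENNReal.summable_toReal h1
  refine h2.congr fun x => ?_
  by_cases hx : x ∈ RS T u v
  · simp only [Set.indicator_of_mem hx, Real.volume_Ioo, ENNReal.toReal_ofReal
      (sub_nonneg.2 hx.2.2.2.le)]
  · simp [Set.indicator_of_notMem hx]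

lemma summable_of_gap_bound (hT : IsClosed T) (hu : u ∈ T) (hv : v ∈ T) {f : ℝ → ℝ} (C : ℝ)
    (hf : ∀ x, |f x| ≤ C * (RS T u v).indicator (fun x => rightNbr T x - x) x) :
    Summable f :=
  Summable.of_norm_bounded ((summable_gaps hT hu hv).mul_left C) hf

lemma integrableOn_id_Ioo : IntegrableOn (fun a : ℝ => a) (Ioo u v) volume :=
  (intervalIntegral.intervalIntegrable_id (μ := volume) (a := u) (b := v)).1.mono_set Set.Ioo_subset_Ioc_self

lemma integral_gaps (hT : IsClosed T) (hu : u ∈ T) (hv : v ∈ T) :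
    ∫ a in Ioo u v \ T, a ∂volume
      = ∑' x : ℝ, (RS T u v).indicator
          (fun x => (rightNbr T x ^ 2 - x ^ 2) / 2) x := by
  have hc : Countable (RS T u v) := (RS_countable (u := u) (v := v)).to_subtype
  rw [union_gaps hT hu hv, integral_iUnion (fun _ => measurableSet_Ioo) gaps_disjoint_subtype
    (integrableOn_id_Ioo.mono_set (by rw [← union_gaps hT hu hv]; exact diff_subset)),
    ← tsum_subtype]
  congr 1
  funext x
  have hle : (x : ℝ) ≤ rightNbr T x := x.2.2.2.2.le
  rw [← MeasureTheory.integral_Ioc_eq_integral_Ioo, ← intervalIntegral.integral_of_le hle,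
    integral_id]

lemma integral_lebesgue_part (hT : IsClosed T) (hu : u ∈ T) (hv : v ∈ T) (huv : u < v) :
    ∫ a in Ioo u v ∩ T, a ∂volume
      = (v ^ 2 - u ^ 2) / 2 - ∑' x : ℝ, (RS T u v).indicator
          (fun x => (rightNbr T x ^ 2 - x ^ 2) / 2) x := by
  have hsplit : ∫ a in Ioo u v ∩ T, a ∂volume + ∫ a in Ioo u v \ T, a ∂volume
      = ∫ a in Ioo u v, a ∂volume := by
    rw [← setIntegral_union]
    · rw [Set.inter_union_diff]
    · exact disjoint_sdiff_right.mono_left Set.inter_subset_right |>.mono_left (le_refl _)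
    · exact measurableSet_Ioo.diff hT.measurableSet
    · exact integrableOn_id_Ioo.mono_set Set.inter_subset_left
    · exact integrableOn_id_Ioo.mono_set diff_subset
  have hIoo : ∫ a in Ioo u v, a ∂volume = (v ^ 2 - u ^ 2) / 2 := by
    rw [← MeasureTheory.integral_Ioc_eq_integral_Ioo, ← intervalIntegral.integral_of_le huv.le,
      integral_id]
  rw [← integral_gaps hT hu hv]
  linarith [hsplit]
/-- The speed measure `μ = 1_T · m + Σ_{x ∈ T not two-sided dense} ((σ(x)-ρ(x))/2) δ_x`. -/
noncomputable def speedMeasure (T : Set ℝ) : Measure ℝ :=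
  volume.restrict T +
    Measure.sum (fun x : {x : ℝ // x ∈ T ∧ (leftNbr T x ≠ x ∨ rightNbr T x ≠ x)} =>
      ENNReal.ofReal ((rightNbr T x - leftNbr T x) / 2) • Measure.dirac (x : ℝ))

/-- Right endpoints of gap intervals inside `(u,v)`: left-scattered points. -/
def LS (T : Set ℝ) (u v : ℝ) : Set ℝ :=
  {y | y ∈ T ∧ u < y ∧ y < v ∧ leftNbr T y < y}

section Atoms
variable {T : Set ℝ} {u v : ℝ}

lemma LS_mem_RS (hT : IsClosed T) (hu : u ∈ T) {y : ℝ} (hy : y ∈ LS T u v) :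
    leftNbr T y ∈ RS T u v ∧ rightNbr T (leftNbr T y) = y := by
  obtain ⟨hyT, huy, hyv, hs⟩ := hy
  have hρT : leftNbr T y ∈ T := leftNbr_mem hT hu huy
  have hσρ : rightNbr T (leftNbr T y) = y := rightNbr_leftNbr hyT hs
  exact ⟨⟨hρT, le_leftNbr hu huy, lt_trans hs hyv, by rw [hσρ]; exact hs⟩, hσρ⟩

lemma LS_countable (hT : IsClosed T) (hu : u ∈ T) : (LS T u v).Countable := by
  have h : LS T u v ⊆ rightNbr T '' RS T u v := fun y hy =>
    ⟨leftNbr T y, (LS_mem_RS hT hu hy).1, (LS_mem_RS hT hu hy).2⟩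
  exact ((RS_countable (u := u) (v := v)).image _).mono h

lemma leftgap_disjoint' {y y' : ℝ} (hy : y ∈ T) (hyy : y < y') :
    Disjoint (Ioo (leftNbr T y) y) (Ioo (leftNbr T y') y') := by
  have h : y ≤ leftNbr T y' := le_leftNbr hy hyy
  rw [Set.disjoint_left]
  intro t ht1 ht2
  exact absurd (lt_of_lt_of_le ht1.2 h) (not_lt.2 ht2.1.le)

lemma leftgaps_disjoint : (LS T u v).PairwiseDisjoint (fun y => Ioo (leftNbr T y) y) := by
  intro x hx y hy hxy
  rcases lt_or_gt_of_ne hxy with h | h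
  · exact leftgap_disjoint' hx.1 h
  · exact (leftgap_disjoint' hy.1 h).symm

lemma volume_leftgaps_sum (hT : IsClosed T) (hu : u ∈ T) :
    ∑' y : LS T u v, volume (Ioo (leftNbr T (y : ℝ)) (y : ℝ)) ≤ ENNReal.ofReal (v - u) := by
  have hc : Countable (LS T u v) := (LS_countable hT hu (v := v)).to_subtype
  have hd : Pairwise (Function.onFun Disjoint fun y : LS T u v => Ioo (leftNbr T (y : ℝ)) (y : ℝ)) :=
    fun i j hij => leftgaps_disjoint i.2 j.2 (Subtype.coe_injective.ne hij)
  rw [← measure_iUnion hd (fun _ => measurableSet_Ioo)]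
  refine le_trans (measure_mono ?_) (le_of_eq Real.volume_Ioo)
  rintro t ⟨s, ⟨y, rfl⟩, ht⟩
  exact ⟨lt_of_le_of_lt (le_leftNbr hu y.2.2.1) ht.1, lt_trans ht.2 y.2.2.2.1⟩

lemma speedMeasure_Ioo_lt_top (hT : IsClosed T) (hu : u ∈ T) (hv : v ∈ T) (huv : u < v) :
    speedMeasure T (Ioo u v) < ⊤ := by
  rw [speedMeasure, Measure.add_apply, Measure.sum_apply _ measurableSet_Ioo]
  have h1 : volume.restrict T (Ioo u v) ≤ ENNReal.ofReal (v - u) := by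
    rw [Measure.restrict_apply measurableSet_Ioo]
    exact le_trans (measure_mono Set.inter_subset_left) (le_of_eq Real.volume_Ioo)
  have h2 : ∀ x : {x : ℝ // x ∈ T ∧ (leftNbr T x ≠ x ∨ rightNbr T x ≠ x)},
      (ENNReal.ofReal ((rightNbr T x - leftNbr T x) / 2) • Measure.dirac (x : ℝ)) (Ioo u v)
        ≤ (if (x : ℝ) ∈ T ∩ Ioo u v then volume (Ioo (x : ℝ) (rightNbr T (x : ℝ))) else 0)
          + (if (x : ℝ) ∈ T ∩ Ioo u v then volume (Ioo (leftNbr T (x : ℝ)) (x : ℝ)) else 0) := by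
    intro x
    rw [Measure.smul_apply, smul_eq_mul, Measure.dirac_apply' _ measurableSet_Ioo]
    by_cases hx : (x : ℝ) ∈ Ioo u v
    · rw [Set.indicator_of_mem hx, if_pos ⟨x.2.1, hx⟩, if_pos ⟨x.2.1, hx⟩, Pi.one_apply, mul_one]
      have hρ : leftNbr T (x : ℝ) ≤ (x : ℝ) := leftNbr_le hu hx.1
      have hσ : (x : ℝ) ≤ rightNbr T (x : ℝ) := le_rightNbr hv hx.2
      rw [Real.volume_Ioo, Real.volume_Ioo, ← ENNReal.ofReal_add (by linarith) (by linarith)]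
      exact ENNReal.ofReal_le_ofReal (by linarith)
    · rw [Set.indicator_of_notMem hx, mul_zero]
      by_cases h : (x : ℝ) ∈ T ∩ Ioo u v
      · exact absurd h.2 hx
      · simp [h]
  refine ENNReal.add_lt_top.2 ⟨lt_of_le_of_lt h1 ENNReal.ofReal_lt_top, ?_⟩
  refine lt_of_le_of_lt (ENNReal.tsum_le_tsum h2) ?_
  rw [ENNReal.tsum_add]
  have key : ∀ (g : ℝ → ℝ≥0∞) (S : Set ℝ),
      (∀ x : ℝ, x ∈ T ∩ Ioo u v → g x ≤ S.indicator g x) →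
      (∑' y : S, g (y : ℝ)) ≤ ENNReal.ofReal (v - u) →
      ∑' x : {x : ℝ // x ∈ T ∧ (leftNbr T x ≠ x ∨ rightNbr T x ≠ x)},
        (if (x : ℝ) ∈ T ∩ Ioo u v then g (x : ℝ) else 0) ≤ ENNReal.ofReal (v - u) := by
    intro g S hle hsum
    refine le_trans (ENNReal.tsum_le_tsum (fun x => ?_)) (le_trans (ENNReal.tsum_comp_le_tsum_of_injective
      Subtype.coe_injective fun x => S.indicator g x) ?_)
    · by_cases h : (x : ℝ) ∈ T ∩ Ioo u v
      · rw [if_pos h]; exact hle _ h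
      · rw [if_neg h]; exact zero_le
    · rw [← tsum_subtype]
      exact hsum
  have hR := key (fun x => volume (Ioo x (rightNbr T x))) (RS T u v) (fun x hx => by
      by_cases hs : x < rightNbr T x
      · rw [Set.indicator_of_mem (show x ∈ RS T u v from ⟨hx.1, hx.2.1.le, hx.2.2, hs⟩)]
      · have h0 : Ioo x (rightNbr T x) = ∅ := Set.Ioo_eq_empty (fun h => hs h)
        simp [h0]) (volume_gaps_sum hT hu hv)
  have hL := key (fun x => volume (Ioo (leftNbr T x) x)) (LS T u v) (fun x hx => by
      by_cases hs : leftNbr T x < x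
      · rw [Set.indicator_of_mem (show x ∈ LS T u v from ⟨hx.1, hx.2.1, hx.2.2, hs⟩)]
      · have h0 : Ioo (leftNbr T x) x = ∅ := Set.Ioo_eq_empty (fun h => hs h)
        simp [h0]) (volume_leftgaps_sum hT hu)
  exact lt_of_le_of_lt (add_le_add hR hL)
    (ENNReal.add_lt_top.2 ⟨ENNReal.ofReal_lt_top, ENNReal.ofReal_lt_top⟩)

end Atoms

section AtomInt
variable {T : Set ℝ} {u v : ℝ}

/-- Atoms of the speed measure lying in `(u,v)`. -/
def Aset (T : Set ℝ) (u v : ℝ) : Set ℝ :=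
  {x | x ∈ T ∧ x ∈ Ioo u v ∧ (leftNbr T x ≠ x ∨ rightNbr T x ≠ x)}

lemma isFiniteMeasure_speed_restrict (hT : IsClosed T) (hu : u ∈ T) (hv : v ∈ T) (huv : u < v) :
    IsFiniteMeasure ((speedMeasure T).restrict (Ioo u v)) := by
  constructor
  rw [Measure.restrict_apply_univ]
  exact speedMeasure_Ioo_lt_top hT hu hv huv

lemma integrable_id_speed (hT : IsClosed T) (hu : u ∈ T) (hv : v ∈ T) (huv : u < v) :
    Integrable (fun a : ℝ => a) ((speedMeasure T).restrict (Ioo u v)) := by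
  have : IsFiniteMeasure ((speedMeasure T).restrict (Ioo u v)) :=
    isFiniteMeasure_speed_restrict hT hu hv huv
  refine Integrable.mono' (integrable_const (max |u| |v|))
    measurable_id.aestronglyMeasurable ?_
  filter_upwards [ae_restrict_mem measurableSet_Ioo] with a ha
  rw [Real.norm_eq_abs]
  rw [abs_le]
  constructor
  · exact le_trans (neg_le_neg (le_max_left |u| |v|)) (le_trans (neg_abs_le u) ha.1.le)
  · exact le_trans ha.2.le (le_trans (le_abs_self v) (le_max_right |u| |v|))

lemma integral_atoms (hT : IsClosed T) (hu : u ∈ T) (hv : v ∈ T) (huv : u < v) :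
    ∫ a in Ioo u v, a ∂(Measure.sum
        (fun x : {x : ℝ // x ∈ T ∧ (leftNbr T x ≠ x ∨ rightNbr T x ≠ x)} =>
          ENNReal.ofReal ((rightNbr T x - leftNbr T x) / 2) • Measure.dirac (x : ℝ)))
      = ∑' x : ℝ, (Aset T u v).indicator
          (fun x => (rightNbr T x - leftNbr T x) / 2 * x) x := by
  set J := {x : ℝ // x ∈ T ∧ (leftNbr T x ≠ x ∨ rightNbr T x ≠ x)} with hJ
  set m : J → Measure ℝ := fun x =>
    ENNReal.ofReal ((rightNbr T x - leftNbr T x) / 2) • Measure.dirac (x : ℝ) with hm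
  have hint : Integrable (fun a : ℝ => a) ((Measure.sum m).restrict (Ioo u v)) := by
    refine (integrable_id_speed hT hu hv huv).mono_measure ?_
    rw [speedMeasure, Measure.restrict_add]
    exact Measure.le_add_left le_rfl
  rw [MeasureTheory.Measure.restrict_sum _ measurableSet_Ioo] at hint ⊢
  rw [integral_sum_measure hint]
  have hterm : ∀ x : J, ∫ a, a ∂((m x).restrict (Ioo u v))
      = (if (x : ℝ) ∈ Ioo u v then (rightNbr T (x : ℝ) - leftNbr T (x : ℝ)) / 2 * (x : ℝ)
          else 0) := by
    intro x
    rw [hm, Measure.restrict_smul, MeasureTheory.restrict_dirac' measurableSet_Ioo]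
    by_cases hx : (x : ℝ) ∈ Ioo u v
    · rw [if_pos hx, if_pos hx, integral_smul_measure, integral_dirac, smul_eq_mul,
        ENNReal.toReal_ofReal]
      have hρ : leftNbr T (x : ℝ) ≤ (x : ℝ) := leftNbr_le hu hx.1
      have hσ : (x : ℝ) ≤ rightNbr T (x : ℝ) := le_rightNbr hv hx.2
      linarith
    · rw [if_neg hx, if_neg hx, smul_zero, integral_zero_measure]
  rw [tsum_congr hterm]
  have h3 : ∑' x : J, (if (x : ℝ) ∈ Ioo u v then
        (rightNbr T (x : ℝ) - leftNbr T (x : ℝ)) / 2 * (x : ℝ) else 0)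
      = ∑' y : ℝ, ({x : ℝ | x ∈ T ∧ (leftNbr T x ≠ x ∨ rightNbr T x ≠ x)}.indicator
          (fun y => if y ∈ Ioo u v then (rightNbr T y - leftNbr T y) / 2 * y else 0)) y :=
    tsum_subtype {x : ℝ | x ∈ T ∧ (leftNbr T x ≠ x ∨ rightNbr T x ≠ x)}
      (fun y => if y ∈ Ioo u v then (rightNbr T y - leftNbr T y) / 2 * y else 0)
  rw [h3]
  refine tsum_congr fun y => ?_
  by_cases h1 : y ∈ {x : ℝ | x ∈ T ∧ (leftNbr T x ≠ x ∨ rightNbr T x ≠ x)}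
  · rw [Set.indicator_of_mem h1]
    by_cases h2 : y ∈ Ioo u v
    · rw [if_pos h2, Set.indicator_of_mem (show y ∈ Aset T u v from ⟨h1.1, h2, h1.2⟩)]
    · rw [if_neg h2, Set.indicator_of_notMem
        (show y ∉ Aset T u v from fun hy => h2 hy.2.1)]
  · rw [Set.indicator_of_notMem h1,
      Set.indicator_of_notMem (show y ∉ Aset T u v from fun hy => h1 ⟨hy.1, hy.2.2⟩)]

end AtomInt

section Final
variable {T : Set ℝ} {u v : ℝ}

/-- Gap left endpoints whose gap ends strictly before `v`. -/
def RSv (T : Set ℝ) (u v : ℝ) : Set ℝ := {x ∈ RS T u v | rightNbr T x < v}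

lemma hC_nonneg : (0 : ℝ) ≤ max |u| |v| := le_trans (abs_nonneg u) (le_max_left _ _)

lemma summable_P1 (hT : IsClosed T) (hu : u ∈ T) (hv : v ∈ T) (huv : u < v) :
    Summable ((Aset T u v).indicator fun x => x * (rightNbr T x - x) / 2) := by
  refine summable_of_gap_bound hT hu hv (max |u| |v|) fun x => ?_
  by_cases hx : x ∈ Aset T u v
  · rw [Set.indicator_of_mem hx]
    have hσ : x ≤ rightNbr T x := le_rightNbr hv hx.2.1.2
    rcases eq_or_lt_of_le hσ with h | h
    · simp [← h, abs_nonneg, mul_nonneg hC_nonneg,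
        Set.indicator_nonneg (fun y (hy : y ∈ RS T u v) => sub_nonneg.2 hy.2.2.2.le) x]
    · have hxRS : x ∈ RS T u v := ⟨hx.1, hx.2.1.1.le, hx.2.1.2, h⟩
      rw [Set.indicator_of_mem hxRS]
      rw [abs_div, abs_mul, abs_two, abs_of_nonneg (sub_nonneg.2 hσ)]
      have hxb : |x| ≤ max |u| |v| := by
        rw [abs_le]
        constructor
        · exact le_trans (neg_le_neg (le_max_left |u| |v|)) (le_trans (neg_abs_le u) hx.2.1.1.le)
        · exact le_trans hx.2.1.2.le (le_trans (le_abs_self v) (le_max_right |u| |v|))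
      nlinarith [abs_nonneg x, sub_nonneg.2 hσ]
  · rw [Set.indicator_of_notMem hx, abs_zero]
    exact mul_nonneg hC_nonneg
      (Set.indicator_nonneg (fun y (hy : y ∈ RS T u v) => sub_nonneg.2 hy.2.2.2.le) x)

lemma summable_RSfun (hT : IsClosed T) (hu : u ∈ T) (hv : v ∈ T) (huv : u < v) :
    Summable ((RSv T u v).indicator fun x => rightNbr T x * (rightNbr T x - x) / 2) := by
  refine summable_of_gap_bound hT hu hv (max |u| |v|) fun x => ?_
  by_cases hx : x ∈ RSv T u v
  · rw [Set.indicator_of_mem hx, Set.indicator_of_mem hx.1]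
    have hσ : x < rightNbr T x := hx.1.2.2.2
    have hσb : |rightNbr T x| ≤ max |u| |v| := by
      rw [abs_le]
      constructor
      · refine le_trans (neg_le_neg (le_max_left |u| |v|)) (le_trans (neg_abs_le u) ?_)
        exact le_trans hx.1.2.1 hσ.le
      · exact le_trans hx.2.le (le_trans (le_abs_self v) (le_max_right |u| |v|))
    rw [abs_div, abs_mul, abs_two, abs_of_nonneg (sub_nonneg.2 hσ.le)]
    nlinarith [abs_nonneg (rightNbr T x), sub_nonneg.2 hσ.le]
  · rw [Set.indicator_of_notMem hx, abs_zero]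
    exact mul_nonneg hC_nonneg
      (Set.indicator_nonneg (fun y (hy : y ∈ RS T u v) => sub_nonneg.2 hy.2.2.2.le) x)

lemma summable_Gfun (hT : IsClosed T) (hu : u ∈ T) (hv : v ∈ T) (huv : u < v) :
    Summable ((RS T u v).indicator fun x => (rightNbr T x ^ 2 - x ^ 2) / 2) := by
  refine summable_of_gap_bound hT hu hv (max |u| |v|) fun x => ?_
  by_cases hx : x ∈ RS T u v
  · rw [Set.indicator_of_mem hx, Set.indicator_of_mem hx]
    have hσ : x < rightNbr T x := hx.2.2.2
    have hxb : -(max |u| |v|) ≤ x := le_trans (neg_le_neg (le_max_left |u| |v|))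
      (le_trans (neg_abs_le u) hx.2.1)
    have hσb : rightNbr T x ≤ max |u| |v| :=
      le_trans (rightNbr_le hv hx.2.2.1) (le_trans (le_abs_self v) (le_max_right |u| |v|))
    have habs : |(rightNbr T x ^ 2 - x ^ 2) / 2| = |rightNbr T x + x| / 2 * (rightNbr T x - x) := by
      rw [show (rightNbr T x ^ 2 - x ^ 2) / 2 = (rightNbr T x + x) / 2 * (rightNbr T x - x)
        by ring, abs_mul, abs_div, abs_two, abs_of_nonneg (sub_nonneg.2 hσ.le)]
    rw [habs]
    have h2 : |rightNbr T x + x| ≤ 2 * max |u| |v| := abs_le.2 ⟨by nlinarith, by nlinarith⟩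
    nlinarith [sub_nonneg.2 hσ.le, abs_nonneg (rightNbr T x + x)]
  · rw [Set.indicator_of_notMem hx, abs_zero]
    exact mul_nonneg hC_nonneg
      (Set.indicator_nonneg (fun y (hy : y ∈ RS T u v) => sub_nonneg.2 hy.2.2.2.le) x)

/-- The bijection between gaps (indexed by left endpoints `RSv`) and their right endpoints `LS`. -/
noncomputable def gapEquiv (hT : IsClosed T) (hu : u ∈ T) (hv : v ∈ T) :
    ↥(RSv T u v) ≃ ↥(LS T u v) where
  toFun x := ⟨rightNbr T x, by
    obtain ⟨⟨hxT, hux, hxv, hs⟩, hσv⟩ := x.2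
    exact ⟨rightNbr_mem hT hv hxv, lt_of_le_of_lt hux hs, hσv, by
      rw [leftNbr_rightNbr hxT hs]; exact hs⟩⟩
  invFun y := ⟨leftNbr T y, by
    have h := LS_mem_RS hT hu y.2
    exact ⟨h.1, by rw [h.2]; exact y.2.2.2.1⟩⟩
  left_inv x := Subtype.ext (leftNbr_rightNbr x.2.1.1 x.2.1.2.2.2)
  right_inv y := Subtype.ext (LS_mem_RS hT hu y.2).2

lemma P2_eq_LS (hu : u ∈ T) : (Aset T u v).indicator (fun x => x * (x - leftNbr T x) / 2)
    = (LS T u v).indicator (fun x => x * (x - leftNbr T x) / 2) := by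
  funext x
  by_cases hx : x ∈ Aset T u v
  · rw [Set.indicator_of_mem hx]
    have hρ : leftNbr T x ≤ x := leftNbr_le hu hx.2.1.1
    rcases eq_or_lt_of_le hρ with h | h
    · rw [Set.indicator_of_notMem (show x ∉ LS T u v from fun hy => absurd h (ne_of_lt hy.2.2.2)), h]
      ring
    · rw [Set.indicator_of_mem (show x ∈ LS T u v from ⟨hx.1, hx.2.1.1, hx.2.1.2, h⟩)]
  · rw [Set.indicator_of_notMem hx, Set.indicator_of_notMem
      (show x ∉ LS T u v from fun hy => hx ⟨hy.1, ⟨hy.2.1, hy.2.2.1⟩, Or.inl hy.2.2.2.ne⟩)]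

lemma tsum_P2 (hT : IsClosed T) (hu : u ∈ T) (hv : v ∈ T) (huv : u < v) :
    (∑' x : ℝ, (Aset T u v).indicator (fun x => x * (x - leftNbr T x) / 2) x
      = ∑' x : ℝ, (RSv T u v).indicator (fun x => rightNbr T x * (rightNbr T x - x) / 2) x)
    ∧ Summable ((Aset T u v).indicator fun x => x * (x - leftNbr T x) / 2) := by
  rw [P2_eq_LS hu]
  set f : ℝ → ℝ := fun x => x * (x - leftNbr T x) / 2 with hf
  set g : ℝ → ℝ := fun x => rightNbr T x * (rightNbr T x - x) / 2 with hg
  set e := gapEquiv hT hu hv (u := u) (v := v) with he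
  have hcomp : ∀ x : ↥(RSv T u v),
      (fun y : ↥(LS T u v) => f (y : ℝ)) (e x) = g (x : ℝ) := by
    intro x
    have hρ : leftNbr T (rightNbr T (x : ℝ)) = (x : ℝ) := leftNbr_rightNbr x.2.1.1 x.2.1.2.2.2
    show rightNbr T (x : ℝ) * (rightNbr T (x : ℝ) - leftNbr T (rightNbr T (x : ℝ))) / 2 = _
    rw [hρ]
  have hsub : Summable (fun x : ↥(RSv T u v) => g (x : ℝ)) :=
    summable_subtype_iff_indicator.2 (summable_RSfun hT hu hv huv)
  have hLSsub : Summable (fun y : ↥(LS T u v) => f (y : ℝ)) :=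
    e.summable_iff.1 (hsub.congr fun x => (hcomp x).symm)
  constructor
  · calc ∑' x : ℝ, (LS T u v).indicator f x
        = ∑' y : ↥(LS T u v), f (y : ℝ) := (tsum_subtype _ _).symm
      _ = ∑' x : ↥(RSv T u v), (fun y : ↥(LS T u v) => f (y : ℝ)) (e x) := (e.tsum_eq _).symm
      _ = ∑' x : ↥(RSv T u v), g (x : ℝ) := tsum_congr hcomp
      _ = ∑' x : ℝ, (RSv T u v).indicator g x := tsum_subtype _ _
  · exact summable_subtype_iff_indicator.1 hLSsub

end Final

section KeyId
variable {T : Set ℝ} {u v : ℝ}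

lemma pointwise_key (hT : IsClosed T) (hu : u ∈ T) (hv : v ∈ T) (huv : u < v) (x : ℝ) :
    (Aset T u v).indicator (fun x => x * (rightNbr T x - x) / 2) x
      + (RSv T u v).indicator (fun x => rightNbr T x * (rightNbr T x - x) / 2) x
      - (RS T u v).indicator (fun x => (rightNbr T x ^ 2 - x ^ 2) / 2) x
    = (if x = u then -(u * (rightNbr T u - u) / 2) else 0)
      + (if x = leftNbr T v ∧ leftNbr T v < v then -(v * (v - leftNbr T v) / 2) else 0) := by
  by_cases hx : x ∈ RS T u v
  · obtain ⟨hxT, hux, hxv, hs⟩ := id hx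
    rw [Set.indicator_of_mem hx]
    have hσv : rightNbr T x ≤ v := rightNbr_le hv hxv
    have hcond : (x = leftNbr T v ∧ leftNbr T v < v) ↔ rightNbr T x = v := by
      constructor
      · rintro ⟨rfl, h2⟩
        exact rightNbr_leftNbr hv h2
      · intro h2
        have hρ := leftNbr_rightNbr hxT hs
        rw [h2] at hρ
        refine ⟨hρ.symm, ?_⟩
        rw [hρ]
        exact lt_of_lt_of_le hs (le_of_eq h2)
    by_cases h1 : u < x
    · rw [Set.indicator_of_mem (show x ∈ Aset T u v from ⟨hxT, ⟨h1, hxv⟩, Or.inr hs.ne'⟩),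
        if_neg h1.ne']
      by_cases h2 : rightNbr T x < v
      · rw [Set.indicator_of_mem (show x ∈ RSv T u v from ⟨hx, h2⟩),
          if_neg (fun hc => absurd (hcond.1 hc) (ne_of_lt h2))]
        ring
      · have hev : rightNbr T x = v := le_antisymm hσv (not_lt.1 h2)
        have hρx : leftNbr T v = x := by
          have hρ := leftNbr_rightNbr hxT hs
          rw [hev] at hρ
          exact hρ
        rw [Set.indicator_of_notMem (show x ∉ RSv T u v from fun hc => h2 hc.2),
          if_pos (hcond.2 hev), hρx, hev]
        ring
    · have hxu : x = u := le_antisymm (not_lt.1 h1) hux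
      rw [Set.indicator_of_notMem (show x ∉ Aset T u v from fun hc => h1 hc.2.1.1),
        if_pos hxu]
      by_cases h2 : rightNbr T x < v
      · rw [Set.indicator_of_mem (show x ∈ RSv T u v from ⟨hx, h2⟩),
          if_neg (fun hc => absurd (hcond.1 hc) (ne_of_lt h2)), hxu]
        ring
      · have hev : rightNbr T x = v := le_antisymm hσv (not_lt.1 h2)
        have hρx : leftNbr T v = x := by
          have hρ := leftNbr_rightNbr hxT hs
          rw [hev] at hρ
          exact hρ
        rw [Set.indicator_of_notMem (show x ∉ RSv T u v from fun hc => h2 hc.2),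
          if_pos (hcond.2 hev), hρx]
        rw [hxu] at hev ⊢
        rw [hev]
        ring
  · have hP1 : (Aset T u v).indicator (fun x => x * (rightNbr T x - x) / 2) x = 0 := by
      by_cases hA : x ∈ Aset T u v
      · rw [Set.indicator_of_mem hA]
        have hσ : x ≤ rightNbr T x := le_rightNbr hv hA.2.1.2
        rcases eq_or_lt_of_le hσ with h | h
        · rw [← h]; ring
        · exact absurd (show x ∈ RS T u v from ⟨hA.1, hA.2.1.1.le, hA.2.1.2, h⟩) hx
      · rw [Set.indicator_of_notMem hA]
    rw [hP1, Set.indicator_of_notMem (show x ∉ RSv T u v from fun hc => hx hc.1),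
      Set.indicator_of_notMem hx]
    have hf1 : (if x = u then -(u * (rightNbr T u - u) / 2) else 0) = 0 := by
      by_cases h : x = u
      · rw [if_pos h]
        have hσu : rightNbr T u ≤ u := by
          by_contra hc
          exact hx (by rw [h]; exact ⟨hu, le_refl u, huv, not_le.1 hc⟩)
        rw [le_antisymm hσu (le_rightNbr hv huv)]
        ring
      · rw [if_neg h]
    have hf2 : (if x = leftNbr T v ∧ leftNbr T v < v then
        -(v * (v - leftNbr T v) / 2) else 0) = 0 := by
      by_cases h : x = leftNbr T v ∧ leftNbr T v < v
      · exfalso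
        have hρRS : leftNbr T v ∈ RS T u v :=
          ⟨leftNbr_mem hT hu huv, le_leftNbr hu huv, h.2, by
            rw [rightNbr_leftNbr hv h.2]; exact h.2⟩
        exact hx (by rw [h.1]; exact hρRS)
      · rw [if_neg h]
    rw [hf1, hf2]
    ring

lemma tsum_f1 : ∑' x : ℝ, (if x = u then -(u * (rightNbr T u - u) / 2) else 0)
    = -(u * (rightNbr T u - u) / 2) := tsum_ite_eq u _

lemma summable_f1 : Summable (fun x : ℝ => if x = u then -(u * (rightNbr T u - u) / 2) else 0) :=
  summable_of_ne_finset_zero (s := {u}) fun b hb => if_neg (by simpa using hb)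

lemma tsum_f2 (hu : u ∈ T) (huv : u < v) :
    ∑' x : ℝ, (if x = leftNbr T v ∧ leftNbr T v < v then -(v * (v - leftNbr T v) / 2) else 0)
      = -(v * (v - leftNbr T v) / 2) := by
  by_cases h : leftNbr T v < v
  · have : ∀ x : ℝ, (if x = leftNbr T v ∧ leftNbr T v < v then
        -(v * (v - leftNbr T v) / 2) else 0)
        = (if x = leftNbr T v then -(v * (v - leftNbr T v) / 2) else 0) := by
      intro x
      simp [h]
    rw [tsum_congr this, tsum_ite_eq]
  · have hρ : leftNbr T v = v := le_antisymm (leftNbr_le hu huv) (not_lt.1 h)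
    have : ∀ x : ℝ, (if x = leftNbr T v ∧ leftNbr T v < v then
        -(v * (v - leftNbr T v) / 2) else 0) = 0 := fun x => if_neg (fun hc => h hc.2)
    rw [tsum_congr this, tsum_zero, hρ]
    ring

lemma summable_f2 : Summable (fun x : ℝ =>
    if x = leftNbr T v ∧ leftNbr T v < v then -(v * (v - leftNbr T v) / 2) else 0) :=
  summable_of_ne_finset_zero (s := {leftNbr T v}) fun b hb =>
    if_neg (fun hc => by simp [hc.1] at hb)

end KeyId

/-- for `u, v ∈ T` with `u < v`,
`∫_{(u,v)} a μ(da) = v²/2 - u²/2 - u (σ(u)-u)/2 - v (v-ρ(v))/2`. -/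
theorem speedMeasure_integral_id (T : Set ℝ) (hT : IsClosed T) (u v : ℝ) (hu : u ∈ T)
    (hv : v ∈ T) (huv : u < v) :
    ∫ a in Set.Ioo u v, a ∂(speedMeasure T)
      = v ^ 2 / 2 - u ^ 2 / 2 - u * (rightNbr T u - u) / 2 - v * (v - leftNbr T v) / 2 := by
  have hint := integrable_id_speed hT hu hv huv
  have hintA : Integrable (fun a : ℝ => a) ((volume.restrict T).restrict (Ioo u v)) :=
    hint.mono_measure (by
      rw [speedMeasure, Measure.restrict_add]
      exact Measure.le_add_right le_rfl)
  have hintB : Integrable (fun a : ℝ => a) ((Measure.sum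
      (fun x : {x : ℝ // x ∈ T ∧ (leftNbr T x ≠ x ∨ rightNbr T x ≠ x)} =>
        ENNReal.ofReal ((rightNbr T x - leftNbr T x) / 2) • Measure.dirac (x : ℝ))).restrict
          (Ioo u v)) :=
    hint.mono_measure (by
      rw [speedMeasure, Measure.restrict_add]
      exact Measure.le_add_left le_rfl)
  rw [show speedMeasure T = volume.restrict T + Measure.sum
      (fun x : {x : ℝ // x ∈ T ∧ (leftNbr T x ≠ x ∨ rightNbr T x ≠ x)} =>
        ENNReal.ofReal ((rightNbr T x - leftNbr T x) / 2) • Measure.dirac (x : ℝ)) from rfl,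
    Measure.restrict_add, integral_add_measure hintA hintB]
  have h1 : ∫ a in Ioo u v, a ∂(volume.restrict T) = ∫ a in Ioo u v ∩ T, a ∂volume := by
    rw [Measure.restrict_restrict measurableSet_Ioo]
  rw [h1, integral_lebesgue_part hT hu hv huv, integral_atoms hT hu hv huv]
  -- split the atom sum
  have hsplit : ∀ x : ℝ, (Aset T u v).indicator
      (fun x => (rightNbr T x - leftNbr T x) / 2 * x) x
      = (Aset T u v).indicator (fun x => x * (rightNbr T x - x) / 2) x
        + (Aset T u v).indicator (fun x => x * (x - leftNbr T x) / 2) x := by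
    intro x
    by_cases hx : x ∈ Aset T u v
    · rw [Set.indicator_of_mem hx, Set.indicator_of_mem hx, Set.indicator_of_mem hx]
      ring
    · rw [Set.indicator_of_notMem hx, Set.indicator_of_notMem hx,
        Set.indicator_of_notMem hx]
      ring
  have hP1 := summable_P1 hT hu hv huv
  have hP2s := (tsum_P2 hT hu hv huv).2
  have hP2e := (tsum_P2 hT hu hv huv).1
  have hRSf := summable_RSfun hT hu hv huv
  have hGf := summable_Gfun hT hu hv huv
  rw [tsum_congr hsplit, Summable.tsum_add hP1 hP2s, hP2e]
  have hcomb : ∑' x : ℝ, (Aset T u v).indicator (fun x => x * (rightNbr T x - x) / 2) x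
      + ∑' x : ℝ, (RSv T u v).indicator (fun x => rightNbr T x * (rightNbr T x - x) / 2) x
      - ∑' x : ℝ, (RS T u v).indicator (fun x => (rightNbr T x ^ 2 - x ^ 2) / 2) x
      = ∑' x : ℝ, ((Aset T u v).indicator (fun x => x * (rightNbr T x - x) / 2) x
        + (RSv T u v).indicator (fun x => rightNbr T x * (rightNbr T x - x) / 2) x
        - (RS T u v).indicator (fun x => (rightNbr T x ^ 2 - x ^ 2) / 2) x) := by
    rw [← Summable.tsum_add hP1 hRSf, ← Summable.tsum_sub (hP1.add hRSf) hGf]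
  have hfinal : ∑' x : ℝ, ((Aset T u v).indicator (fun x => x * (rightNbr T x - x) / 2) x
      + (RSv T u v).indicator (fun x => rightNbr T x * (rightNbr T x - x) / 2) x
      - (RS T u v).indicator (fun x => (rightNbr T x ^ 2 - x ^ 2) / 2) x)
      = -(u * (rightNbr T u - u) / 2) + -(v * (v - leftNbr T v) / 2) := by
    rw [tsum_congr (pointwise_key hT hu hv huv), Summable.tsum_add summable_f1 summable_f2,
      tsum_f1, tsum_f2 hu huv]
  linarith [hcomb, hfinal]
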